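/- Second-derivative sign of the worst-case coefficient: for reals s₁, s₂ ≥ 0, integer 0 ≤ m ≤ s₁+s₂, probabilities p_i, p_j ≥ 0 with p_i+p_j ≤ 1, and β = 1−p_i−p_j ≥ 0, the function c(t) = (s₁+1−t)(s₂+1−m+t) / (p_i(s₁+1)(s₂+1−m+t) + p_j(s₂+1)(s₁+1−t) + β(s₁+1−t)(s₂+1−m+t)) is concave in t on the interval where the denominator is positive and the factors (s₁+1−t), (s₂+1−m+t) are nonnegative. -/

import Mathlib

/-- Key algebraic identity for the second derivative numerator. -/
lemma aux_E_identity (a b β u v : ℝ) :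
    (-2 * (a * v + b * u + β * u * v) + 2 * β * (u * v)) * (a * v + b * u + β * u * v) -
      2 * (a - b + β * (u - v)) *
        ((u - v) * (a * v + b * u + β * u * v) - u * v * (a - b + β * (u - v)))
    = -2 * (a * b * (u + v) ^ 2 + β * (a * v ^ 3 + b * u ^ 3)) := by
  ring

/-- Quotient-rule bookkeeping identity. -/
lemma aux_div_identity (D Dp G Gp : ℝ) (hD : D ≠ 0) :
    (Gp * D ^ 2 - G * ((2 : ℕ) * D ^ 1 * Dp)) / (D ^ 2) ^ 2
      = (Gp * D - 2 * Dp * G) / D ^ 3 := by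
  field_simp
  ring

/-- Concavity of the worst-case coefficient (Lemma 2): the function
`c(t) = (s₁+1−t)(s₂+1−m+t)/(p_i(s₁+1)(s₂+1−m+t) + p_j(s₂+1)(s₁+1−t) + β(s₁+1−t)(s₂+1−m+t))`
is concave in `t` on the set where the factors are nonnegative and the denominator is
positive. -/
theorem stmt_17 (s₁ s₂ : ℝ) (hs₁ : 0 ≤ s₁) (hs₂ : 0 ≤ s₂)
    (m : ℕ) (hm : (m : ℝ) ≤ s₁ + s₂)
    (p_i p_j β : ℝ) (hpi : 0 ≤ p_i) (hpj : 0 ≤ p_j) (hsum : p_i + p_j ≤ 1)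
    (hβ : β = 1 - p_i - p_j) :
    ConcaveOn ℝ
      {t : ℝ | 0 ≤ s₁ + 1 - t ∧ 0 ≤ s₂ + 1 - m + t ∧
        0 < p_i * (s₁ + 1) * (s₂ + 1 - m + t) + p_j * (s₂ + 1) * (s₁ + 1 - t) +
          β * (s₁ + 1 - t) * (s₂ + 1 - m + t)}
      (fun t => (s₁ + 1 - t) * (s₂ + 1 - m + t) /
        (p_i * (s₁ + 1) * (s₂ + 1 - m + t) + p_j * (s₂ + 1) * (s₁ + 1 - t) +
          β * (s₁ + 1 - t) * (s₂ + 1 - m + t))) := by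
  have hβ0 : 0 ≤ β := by rw [hβ]; linarith
  set Dfun : ℝ → ℝ := fun t =>
    p_i * (s₁ + 1) * (s₂ + 1 - m + t) + p_j * (s₂ + 1) * (s₁ + 1 - t) +
      β * (s₁ + 1 - t) * (s₂ + 1 - m + t) with hDfun
  set S : Set ℝ := {t : ℝ | 0 ≤ s₁ + 1 - t ∧ 0 ≤ s₂ + 1 - m + t ∧ 0 < Dfun t} with hS
  -- convexity of S
  have hconv : Convex ℝ S := by
    intro x hx y hy la mu hla hmu hlamu
    obtain ⟨hx1, hx2, hx3⟩ := hx
    obtain ⟨hy1, hy2, hy3⟩ := hy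
    simp only [smul_eq_mul]
    refine ⟨by nlinarith [mul_nonneg hla hx1, mul_nonneg hmu hy1],
      by nlinarith [mul_nonneg hla hx2, mul_nonneg hmu hy2], ?_⟩
    have key : Dfun (la * x + mu * y)
        = la * Dfun x + mu * Dfun y + β * la * mu * (x - y) ^ 2 := by
      have hmu' : mu = 1 - la := by linarith
      subst hmu'
      simp only [hDfun]; ring
    have hpos : 0 < la * Dfun x + mu * Dfun y := by
      rcases eq_or_lt_of_le hla with h | h
      · have hmu1 : mu = 1 := by linarith
        rw [← h, hmu1]; simpa using hy3
      · have h1 : 0 < la * Dfun x := mul_pos h hx3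
        have h2 : 0 ≤ mu * Dfun y := mul_nonneg hmu hy3.le
        linarith
    have hterm : 0 ≤ β * la * mu * (x - y) ^ 2 := by positivity
    rw [key]; linarith
  -- continuity
  have hcont : ContinuousOn
      (fun t => (s₁ + 1 - t) * (s₂ + 1 - m + t) / Dfun t) S := by
    apply ContinuousOn.div
    · fun_prop
    · fun_prop
    · exact fun x hx => ne_of_gt hx.2.2
  -- strict positivity on the interior
  have hint : ∀ x ∈ interior S, 0 < s₁ + 1 - x ∧ 0 < s₂ + 1 - (m : ℝ) + x ∧ 0 < Dfun x := by
    intro x hx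
    have hxS := interior_subset hx
    rw [mem_interior_iff_mem_nhds, Metric.mem_nhds_iff] at hx
    obtain ⟨ε, hε, hball⟩ := hx
    have hx1 : x + ε / 2 ∈ S := by
      apply hball
      rw [Metric.mem_ball, Real.dist_eq]
      have h : x + ε / 2 - x = ε / 2 := by ring
      rw [h, abs_of_nonneg (by linarith)]
      linarith
    have hx2 : x - ε / 2 ∈ S := by
      apply hball
      rw [Metric.mem_ball, Real.dist_eq]
      have h : x - ε / 2 - x = -(ε / 2) := by ring
      rw [h, abs_neg, abs_of_nonneg (by linarith)]
      linarith
    refine ⟨?_, ?_, hxS.2.2⟩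
    · have := hx1.1; linarith
    · have := hx2.2.1; linarith
  -- derivative building blocks
  have hu : ∀ x : ℝ, HasDerivAt (fun t : ℝ => s₁ + 1 - t) (-1) x := by
    intro x
    simpa using ((hasDerivAt_id x).const_sub (s₁ + 1))
  have hv : ∀ x : ℝ, HasDerivAt (fun t : ℝ => s₂ + 1 - (m : ℝ) + t) 1 x := by
    intro x
    simpa using ((hasDerivAt_id x).const_add (s₂ + 1 - (m : ℝ)))
  have hN : ∀ x : ℝ, HasDerivAt (fun t : ℝ => (s₁ + 1 - t) * (s₂ + 1 - (m : ℝ) + t))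
      ((s₁ + 1 - x) - (s₂ + 1 - (m : ℝ) + x)) x := by
    intro x
    have h := (hu x).mul (hv x)
    exact h.congr_deriv (by ring)
  have hD : ∀ x : ℝ, HasDerivAt Dfun
      (p_i * (s₁ + 1) - p_j * (s₂ + 1) + β * ((s₁ + 1 - x) - (s₂ + 1 - (m : ℝ) + x))) x := by
    intro x
    have h1 := (hv x).const_mul (p_i * (s₁ + 1))
    have h2 := (hu x).const_mul (p_j * (s₂ + 1))
    have h3 := ((hu x).const_mul β).mul (hv x)
    have h := (h1.add h2).add h3
    exact h.congr_deriv (by ring)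
  set Np : ℝ → ℝ := fun x => (s₁ + 1 - x) - (s₂ + 1 - (m : ℝ) + x) with hNp
  set Dp : ℝ → ℝ := fun x =>
    p_i * (s₁ + 1) - p_j * (s₂ + 1) + β * ((s₁ + 1 - x) - (s₂ + 1 - (m : ℝ) + x)) with hDp
  set Nf : ℝ → ℝ := fun x => (s₁ + 1 - x) * (s₂ + 1 - (m : ℝ) + x) with hNf
  set Gf : ℝ → ℝ := fun x => Np x * Dfun x - Nf x * Dp x with hGf
  set f1 : ℝ → ℝ := fun x => Gf x / (Dfun x) ^ 2 with hf1
  set f2 : ℝ → ℝ := fun x =>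
    ((-2 * Dfun x + 2 * β * Nf x) * Dfun x - 2 * Dp x * Gf x) / (Dfun x) ^ 3 with hf2
  apply concaveOn_of_hasDerivWithinAt2_nonpos (f' := f1) (f'' := f2) hconv hcont
  · -- first derivative
    intro x hx
    obtain ⟨h1, h2, h3⟩ := hint x hx
    have hDne : Dfun x ≠ 0 := ne_of_gt h3
    exact ((hN x).div (hD x) hDne).hasDerivWithinAt
  · -- second derivative
    intro x hx
    obtain ⟨h1, h2, h3⟩ := hint x hx
    have hDne : Dfun x ≠ 0 := ne_of_gt h3
    have hNp' : HasDerivAt Np (-2) x := by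
      have h := (hu x).sub (hv x)
      exact h.congr_deriv (by norm_num)
    have hDp' : HasDerivAt Dp (β * (-1 - 1)) x := by
      have h := (((hu x).sub (hv x)).const_mul β).const_add (p_i * (s₁ + 1) - p_j * (s₂ + 1))
      exact h
    have hG : HasDerivAt Gf
        ((-2) * Dfun x + Np x * Dp x - (Np x * Dp x + Nf x * (β * (-1 - 1)))) x :=
      (hNp'.mul (hD x)).sub ((hN x).mul hDp')
    have hD2 : HasDerivAt (fun y => (Dfun y) ^ 2) ((2 : ℕ) * Dfun x ^ 1 * Dp x) x :=
      (hD x).pow 2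
    have hder := hG.div hD2 (pow_ne_zero 2 hDne)
    refine HasDerivWithinAt.congr_deriv hder.hasDerivWithinAt ?_
    rw [hf2]
    have heq : (-2) * Dfun x + Np x * Dp x - (Np x * Dp x + Nf x * (β * (-1 - 1)))
        = -2 * Dfun x + 2 * β * Nf x := by ring
    rw [heq]
    exact aux_div_identity (Dfun x) (Dp x) (Gf x)
      (-2 * Dfun x + 2 * β * Nf x) hDne
  · -- nonpositivity of the second derivative
    intro x hx
    obtain ⟨h1, h2, h3⟩ := hint x hx
    have ha : 0 ≤ p_i * (s₁ + 1) := by positivity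
    have hb : 0 ≤ p_j * (s₂ + 1) := by positivity
    rw [hf2]
    apply div_nonpos_of_nonpos_of_nonneg _ (by positivity)
    have hE : (-2 * Dfun x + 2 * β * Nf x) * Dfun x - 2 * Dp x * Gf x
        = -2 * ((p_i * (s₁ + 1)) * (p_j * (s₂ + 1)) *
            ((s₁ + 1 - x) + (s₂ + 1 - (m : ℝ) + x)) ^ 2
          + β * ((p_i * (s₁ + 1)) * (s₂ + 1 - (m : ℝ) + x) ^ 3
            + (p_j * (s₂ + 1)) * (s₁ + 1 - x) ^ 3)) := by
      simp only [hGf, hNf, hNp, hDp, hDfun]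
      exact aux_E_identity (p_i * (s₁ + 1)) (p_j * (s₂ + 1)) β
        (s₁ + 1 - x) (s₂ + 1 - (m : ℝ) + x)
    rw [hE]
    have t1 : 0 ≤ (p_i * (s₁ + 1)) * (p_j * (s₂ + 1)) *
        ((s₁ + 1 - x) + (s₂ + 1 - (m : ℝ) + x)) ^ 2 := by positivity
    have t2 : 0 ≤ β * ((p_i * (s₁ + 1)) * (s₂ + 1 - (m : ℝ) + x) ^ 3
        + (p_j * (s₂ + 1)) * (s₁ + 1 - x) ^ 3) := by positivity
    linarith
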